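/- Let A, B ⊆ ℝⁿ be finite sets. Then A and B can be strictly separated by a sphere of radius at most 1 with A inside — i.e., there exist c ∈ ℝⁿ and 0 < r ≤ 1 with A ⊆ {y : ‖y − c‖ < r} and B disjoint from {y : ‖y − c‖ ≤ r} — if and only if for every subset T ⊆ A ∪ B with card T ≤ n + 2 there exist c_T ∈ ℝⁿ and 0 < r_T ≤ 1 with T ∩ A ⊆ {y : ‖y − c_T‖ < r_T} and T ∩ B disjoint from {y : ‖y − c_T‖ ≤ r_T}. -/

import Mathlib

noncomputable section

/-- `B[X]`: the intersection of all closed unit balls centered at points of `X`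
(`Set.univ` when `X = ∅`). -/
def ballInter {n : ℕ} (X : Set (EuclideanSpace ℝ (Fin n))) :
    Set (EuclideanSpace ℝ (Fin n)) :=
  ⋂ x ∈ X, Metric.closedBall x 1

/-- The closed spindle `[a,b]_s`: `B[B[{a,b}]]` if `dist a b ≤ 2`, all of the space
otherwise. -/
def spindle {n : ℕ} (a b : EuclideanSpace ℝ (Fin n)) :
    Set (EuclideanSpace ℝ (Fin n)) :=
  if dist a b ≤ 2 then ballInter (ballInter {a, b}) else Set.univ

/-- A set is spindle convex if it contains the closed spindle of any two of its points. -/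
def SpindleConvex {n : ℕ} (C : Set (EuclideanSpace ℝ (Fin n))) : Prop :=
  ∀ a ∈ C, ∀ b ∈ C, spindle a b ⊆ C

/-- The spindle convex hull: the intersection of all spindle convex sets containing `X`. -/
def spindleHull {n : ℕ} (X : Set (EuclideanSpace ℝ (Fin n))) :
    Set (EuclideanSpace ℝ (Fin n)) :=
  ⋂₀ {C : Set (EuclideanSpace ℝ (Fin n)) | X ⊆ C ∧ SpindleConvex C}

/-- Arc-distance `ρ(a,b) = 2 · arcsin(‖a - b‖ / 2)`. -/
def arcDist {n : ℕ} (a b : EuclideanSpace ℝ (Fin n)) : ℝ :=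
  2 * Real.arcsin (dist a b / 2)

theorem kirchberger_for_spheres_of_radius_le_one (n : ℕ)
    (A B : Set (EuclideanSpace ℝ (Fin n))) (hA : A.Finite) (hB : B.Finite) :
    (∃ (c : EuclideanSpace ℝ (Fin n)) (r : ℝ), 0 < r ∧ r ≤ 1 ∧
        A ⊆ Metric.ball c r ∧ Disjoint B (Metric.closedBall c r)) ↔
      ∀ T : Set (EuclideanSpace ℝ (Fin n)), T ⊆ A ∪ B → T.ncard ≤ n + 2 →
        ∃ (c : EuclideanSpace ℝ (Fin n)) (r : ℝ), 0 < r ∧ r ≤ 1 ∧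
          T ∩ A ⊆ Metric.ball c r ∧ Disjoint (T ∩ B) (Metric.closedBall c r) := by
  classical
  constructor
  · rintro ⟨c, r, hr0, hr1, hball, hdisj⟩ T _ _
    exact ⟨c, r, hr0, hr1, (Set.inter_subset_right).trans hball,
      hdisj.mono_left Set.inter_subset_right⟩
  intro h
  -- A ∩ B = ∅
  have hAB : ∀ y, y ∈ A → y ∈ B → False := by
    intro y hyA hyB
    obtain ⟨c, r, hr0, hr1, hball, hdisj⟩ := h {y} (by
      intro x hx; rw [Set.mem_singleton_iff] at hx; subst hx; exact Or.inl hyA)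
      (by simp)
    have h1 : y ∈ Metric.ball c r := hball ⟨rfl, hyA⟩
    have h2 : y ∉ Metric.closedBall c r :=
      Set.disjoint_left.mp hdisj ⟨rfl, hyB⟩
    exact h2 (Metric.ball_subset_closedBall h1)
  rcases A.eq_empty_or_nonempty with hAe | ⟨a0, ha0⟩
  · -- A empty case
    rcases B.eq_empty_or_nonempty with hBe | ⟨b0, hb0⟩
    · exact ⟨0, 1, one_pos, le_refl 1, by simp [hAe], by simp [hBe]⟩
    rcases Nat.eq_zero_or_pos n with hn | hn
    · -- n = 0 : the space is a subsingleton, so B = {b0}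
      have hsub : ∀ x y : EuclideanSpace ℝ (Fin n), x = y := by
        intro x y
        ext i
        exact absurd i.2 (by omega)
      obtain ⟨c, r, hr0, hr1, _, hdisj⟩ := h {b0}
        (by intro x hx; rw [Set.mem_singleton_iff] at hx; subst hx; exact Or.inr hb0)
        (by simp)
      refine ⟨c, r, hr0, hr1, by simp [hAe], hdisj.mono_left ?_⟩
      intro x hx
      exact ⟨hsub x b0, hx⟩
    · -- n ≥ 1 : put the ball far away from B
      obtain ⟨R, hR⟩ := (hB.isBounded).subset_closedBall 0
      set u : EuclideanSpace ℝ (Fin n) := EuclideanSpace.single ⟨0, hn⟩ (1 : ℝ)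
      have hu : ‖u‖ = 1 := by
        rw [EuclideanSpace.norm_single]; norm_num
      refine ⟨(|R| + 2) • u, 1, one_pos, le_refl 1, by simp [hAe], ?_⟩
      rw [Set.disjoint_left]
      intro b hbB hbC
      have h1 : ‖b‖ ≤ |R| := le_trans (by simpa using hR hbB) (le_abs_self R)
      have h2 : ‖b - (|R| + 2) • u‖ ≤ 1 := by simpa [dist_eq_norm] using hbC
      have h3 : ‖(|R| + 2) • u‖ = |R| + 2 := by
        rw [norm_smul, hu, mul_one]
        exact abs_of_pos (by positivity)
      have h4 : ‖(|R| + 2) • u‖ - ‖b‖ ≤ ‖b - (|R| + 2) • u‖ := by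
        have := norm_sub_norm_le ((|R| + 2) • u) b
        rwa [norm_sub_rev] at this
      rw [h3] at h4
      linarith
  · -- Main case: A nonempty. Lift to EuclideanSpace ℝ (Fin n) × ℝ and apply Helly's theorem.
    have hABfin : (A ∪ B).Finite := hA.union hB
    set s : Finset (EuclideanSpace ℝ (Fin n)) := hABfin.toFinset with hs
    -- convex sets in EuclideanSpace ℝ (Fin n) × ℝ
    set F : EuclideanSpace ℝ (Fin n) → Set (EuclideanSpace ℝ (Fin n) × ℝ) := fun x =>
      {p : EuclideanSpace ℝ (Fin n) × ℝ | (if x ∈ A then ‖x‖ ^ 2 < 2 * (inner ℝ p.1 x : ℝ) - p.2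
          else 2 * (inner ℝ p.1 x : ℝ) - p.2 < ‖x‖ ^ 2) ∧ ‖p.1‖ ^ 2 - 1 ≤ p.2} with hF
    have hrank : Module.finrank ℝ (EuclideanSpace ℝ (Fin n) × ℝ) = n + 1 := by
      rw [Module.finrank_prod, finrank_euclideanSpace_fin, Module.finrank_self]
    -- the parabola epigraph is convex
    have hepi : Convex ℝ {p : EuclideanSpace ℝ (Fin n) × ℝ | ‖p.1‖ ^ 2 - 1 ≤ p.2} := by
      rintro ⟨p, t⟩ hp ⟨q, u⟩ hq a b ha hb hab
      simp only [Set.mem_setOf_eq] at hp hq ⊢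
      have h1 : ‖a • p + b • q‖ ≤ a * ‖p‖ + b * ‖q‖ := by
        calc ‖a • p + b • q‖ ≤ ‖a • p‖ + ‖b • q‖ := norm_add_le _ _
        _ = a * ‖p‖ + b * ‖q‖ := by
            rw [norm_smul, norm_smul, Real.norm_of_nonneg ha, Real.norm_of_nonneg hb]
      have h2 : ‖a • p + b • q‖ ^ 2 ≤ (a * ‖p‖ + b * ‖q‖) ^ 2 :=
        pow_le_pow_left₀ (norm_nonneg _) h1 2
      have h3 : (a * ‖p‖ + b * ‖q‖) ^ 2 ≤ a * ‖p‖ ^ 2 + b * ‖q‖ ^ 2 := by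
        nlinarith [sq_nonneg (‖p‖ - ‖q‖), mul_nonneg ha hb]
      have : (a • (p, t) + b • (q, u) : EuclideanSpace ℝ (Fin n) × ℝ).1 = a • p + b • q := rfl
      have ht : (a • (p, t) + b • (q, u) : EuclideanSpace ℝ (Fin n) × ℝ).2 = a * t + b * u := rfl
      rw [this, ht]
      nlinarith
    have hlin : ∀ x : EuclideanSpace ℝ (Fin n), IsLinearMap ℝ (fun p : EuclideanSpace ℝ (Fin n) × ℝ => 2 * (inner ℝ p.1 x : ℝ) - p.2) := by
      intro x
      constructor
      · intro p q
        simp only [Prod.fst_add, Prod.snd_add, inner_add_left]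
        ring
      · intro c p
        simp only [Prod.smul_fst, Prod.smul_snd, inner_smul_left, RCLike.conj_to_real,
          smul_eq_mul]
        ring
    have hconv : ∀ x ∈ s, Convex ℝ (F x) := by
      intro x _
      rw [hF]
      by_cases hx : x ∈ A
      · simp only [if_pos hx]
        exact (convex_halfSpace_gt (hlin x) (‖x‖ ^ 2)).inter hepi
      · simp only [if_neg hx]
        exact (convex_halfSpace_lt (hlin x) (‖x‖ ^ 2)).inter hepi
    -- Helly hypothesis
    have hinter : ∀ I ⊆ s, I.card ≤ Module.finrank ℝ (EuclideanSpace ℝ (Fin n) × ℝ) + 1 → (⋂ i ∈ I, F i).Nonempty := by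
      intro I hIs hIcard
      have hTsub : (I : Set (EuclideanSpace ℝ (Fin n))) ⊆ A ∪ B := by
        intro x hx
        have := hIs hx
        rwa [hs, Set.Finite.mem_toFinset] at this
      obtain ⟨c, r, hr0, hr1, hball, hdisj⟩ := h (I : Set (EuclideanSpace ℝ (Fin n))) hTsub
        (by rw [Set.ncard_coe_finset]; omega)
      refine ⟨(c, ‖c‖ ^ 2 - r ^ 2), Set.mem_biInter ?_⟩
      intro i hi
      have hi' : (i : EuclideanSpace ℝ (Fin n)) ∈ (I : Set (EuclideanSpace ℝ (Fin n))) := hi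
      constructor
      · by_cases hiA : i ∈ A
        · rw [if_pos hiA]
          have hmem : i ∈ Metric.ball c r := hball ⟨hi', hiA⟩
          have hd : ‖i - c‖ < r := by rwa [Metric.mem_ball, dist_eq_norm] at hmem
          have hd2 : ‖i - c‖ ^ 2 < r ^ 2 :=
            pow_lt_pow_left₀ hd (norm_nonneg _) (by norm_num)
          have hexp : ‖i - c‖ ^ 2 = ‖i‖ ^ 2 - 2 * (inner ℝ i c : ℝ) + ‖c‖ ^ 2 :=
            norm_sub_sq_real i c
          have hsymm : (inner ℝ c i : ℝ) = (inner ℝ i c : ℝ) := real_inner_comm i c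
          simp only
          linarith [hexp ▸ hd2, hsymm]
        · rw [if_neg hiA]
          have hiB : i ∈ B := by
            rcases hTsub hi' with h' | h'
            · exact absurd h' hiA
            · exact h'
          have hmem : i ∉ Metric.closedBall c r :=
            Set.disjoint_left.mp hdisj ⟨hi', hiB⟩
          have hd : r < ‖i - c‖ := by
            rw [Metric.mem_closedBall, dist_eq_norm, not_le] at hmem
            exact hmem
          have hd2 : r ^ 2 < ‖i - c‖ ^ 2 := pow_lt_pow_left₀ hd hr0.le (by norm_num)
          have hexp : ‖i - c‖ ^ 2 = ‖i‖ ^ 2 - 2 * (inner ℝ i c : ℝ) + ‖c‖ ^ 2 :=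
            norm_sub_sq_real i c
          have hsymm : (inner ℝ c i : ℝ) = (inner ℝ i c : ℝ) := real_inner_comm i c
          simp only
          linarith [hexp ▸ hd2, hsymm]
      · simp only
        nlinarith
    obtain ⟨⟨c, t⟩, hct⟩ := Convex.helly_theorem' hconv hinter
    -- extract memberships
    have hmem : ∀ x, x ∈ A ∪ B → (c, t) ∈ F x := by
      intro x hx
      have hxs : x ∈ s := by rwa [hs, Set.Finite.mem_toFinset]
      exact Set.mem_iInter₂.mp hct x hxs
    have hApt : ∀ a ∈ A, ‖a - c‖ ^ 2 < ‖c‖ ^ 2 - t := by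
      intro a ha
      have := (hmem a (Or.inl ha)).1
      rw [if_pos ha] at this
      have hexp : ‖a - c‖ ^ 2 = ‖a‖ ^ 2 - 2 * (inner ℝ a c : ℝ) + ‖c‖ ^ 2 :=
        norm_sub_sq_real a c
      have hsymm : (inner ℝ c a : ℝ) = (inner ℝ a c : ℝ) := real_inner_comm a c
      simp only at this
      linarith
    have hBpt : ∀ b ∈ B, ‖c‖ ^ 2 - t < ‖b - c‖ ^ 2 := by
      intro b hb
      have hbA : b ∉ A := fun h' => hAB b h' hb
      have := (hmem b (Or.inr hb)).1
      rw [if_neg hbA] at this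
      have hexp : ‖b - c‖ ^ 2 = ‖b‖ ^ 2 - 2 * (inner ℝ b c : ℝ) + ‖c‖ ^ 2 :=
        norm_sub_sq_real b c
      have hsymm : (inner ℝ c b : ℝ) = (inner ℝ b c : ℝ) := real_inner_comm b c
      simp only at this
      linarith
    have hle1 : ‖c‖ ^ 2 - t ≤ 1 := by
      have := (hmem a0 (Or.inl ha0)).2
      simp only at this
      linarith
    have hpos : 0 < ‖c‖ ^ 2 - t :=
      lt_of_le_of_lt (sq_nonneg ‖a0 - c‖) (hApt a0 ha0)
    refine ⟨c, Real.sqrt (‖c‖ ^ 2 - t), Real.sqrt_pos.mpr hpos,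
      Real.sqrt_le_one.mpr hle1, ?_, ?_⟩
    · intro a ha
      rw [Metric.mem_ball, dist_eq_norm]
      have h1 := hApt a ha
      have h2 : Real.sqrt (‖a - c‖ ^ 2) < Real.sqrt (‖c‖ ^ 2 - t) :=
        Real.sqrt_lt_sqrt (sq_nonneg _) h1
      rwa [Real.sqrt_sq (norm_nonneg _)] at h2
    · rw [Set.disjoint_left]
      intro b hbB hbC
      rw [Metric.mem_closedBall, dist_eq_norm] at hbC
      have h1 := hBpt b hbB
      have h2 : ‖b - c‖ ^ 2 ≤ Real.sqrt (‖c‖ ^ 2 - t) ^ 2 :=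
        pow_le_pow_left₀ (norm_nonneg _) hbC 2
      rw [Real.sq_sqrt hpos.le] at h2
      linarith
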